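/- In an l-modest hypergraph with 3 ≤ k ≤ l, the 2k vertices of any witnessed cycle x_1,...,x_k,y_1,...,y_k form a dense set of cardinality 2k; in particular, the k hyperedges {x_i, x_{i+1}, y_i} (indices mod k) are pairwise distinct. -/

import Mathlib

variable {V : Type*} [DecidableEq V] [Fintype V]

/-- The weight of a vertex set `X`: the number of hyperedges contained in `X`. -/
def hWeight (T : Finset (Finset V)) (X : Finset V) : ℕ :=
  (T.filter (· ⊆ X)).card

/-- A vertex set `X` is dense if `‖X‖ ≤ 2[X]`. -/
def HDense (T : Finset (Finset V)) (X : Finset V) : Prop :=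
  X.card ≤ 2 * hWeight T X

/-- A vertex set `X` is super-dense (immodest) if `‖X‖ < 2[X]`. -/
def HSuperDense (T : Finset (Finset V)) (X : Finset V) : Prop :=
  X.card < 2 * hWeight T X

/-- A hypergraph is `l`-meager if it has no (nonempty) dense vertex set of cardinality `≤ 2l`. -/
def HMeager (T : Finset (Finset V)) (l : ℕ) : Prop :=
  ∀ X : Finset V, X.Nonempty → X.card ≤ 2 * l → ¬ HDense T X

/-- A hypergraph is `l`-modest if it has no super-dense vertex set of cardinality `≤ 2l`. -/
def HModest (T : Finset (Finset V)) (l : ℕ) : Prop :=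
  ∀ X : Finset V, X.card ≤ 2 * l → ¬ HSuperDense T X

/-- Vertices `x` and `y` are adjacent if some hyperedge contains both. -/
def Adjacent (T : Finset (Finset V)) (x y : V) : Prop :=
  x ≠ y ∧ ∃ h ∈ T, x ∈ h ∧ y ∈ h

/-- A weak cycle: `k ≥ 3` distinct vertices (indices mod `k`, cyclic successor given
by `finRotate`), consecutive vertices adjacent, and either `k > 3` or (`k = 3` and)
the set of the three vertices is not a hyperedge. -/
def IsWeakCycle (T : Finset (Finset V)) {k : ℕ} (x : Fin k → V) : Prop :=
  3 ≤ k ∧ Function.Injective x ∧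
    (∀ i : Fin k, Adjacent T (x i) (x (finRotate k i))) ∧
    (3 < k ∨ Finset.univ.image x ∉ T)

/-- A cycle: either a cycle of length `k ≥ 3` (a weak cycle with no consecutive triple
forming a hyperedge), or a cycle of length `2` (two vertices lying in two distinct
hyperedges whose witnesses are distinct and different from the two vertices). -/
def IsCycle (T : Finset (Finset V)) {k : ℕ} (x : Fin k → V) : Prop :=
  (3 ≤ k ∧ IsWeakCycle T x ∧
    ∀ i : Fin k,
      ({x i, x (finRotate k i), x (finRotate k (finRotate k i))} : Finset V) ∉ T)
  ∨ (k = 2 ∧ Function.Injective x ∧ ∃ y₁ y₂ : V, y₁ ≠ y₂ ∧ (∀ i, y₁ ≠ x i) ∧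
      (∀ i, y₂ ≠ x i) ∧ insert y₁ (Finset.univ.image x) ∈ T ∧
      insert y₂ (Finset.univ.image x) ∈ T)

/-- In an `l`-modest hypergraph with `3 ≤ k ≤ l`, the `2k` vertices of any witnessed
cycle `x₁,…,x_k,y₁,…,y_k` form a dense set of cardinality `2k`; in particular the `k`
hyperedges `{x_i, x_{i+1}, y_i}` are pairwise distinct. -/
theorem stmt3 (T : Finset (Finset V)) (hT : ∀ h ∈ T, h.card = 3) (l k : ℕ)
    (hmodest : HModest T l) (h3 : 3 ≤ k) (hkl : k ≤ l)
    (x y : Fin k → V) (hinj : Function.Injective x)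
    (hadj : ∀ i : Fin k, Adjacent T (x i) (x (finRotate k i)))
    (hnotriple : ∀ i : Fin k,
      ({x i, x (finRotate k i), x (finRotate k (finRotate k i))} : Finset V) ∉ T)
    (hwit : ∀ i : Fin k, ({x i, x (finRotate k i), y i} : Finset V) ∈ T) :
    (Finset.univ.image x ∪ Finset.univ.image y).card = 2 * k ∧
    HDense T (Finset.univ.image x ∪ Finset.univ.image y) ∧
    Function.Injective
      (fun i : Fin k => ({x i, x (finRotate k i), y i} : Finset V)) := by
  obtain ⟨n, rfl⟩ : ∃ n, k = n + 3 := ⟨k - 3, by omega⟩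
  have hrot : ∀ i : Fin (n+3), finRotate (n+3) i = i + 1 := fun i => finRotate_succ_apply i
  simp only [hrot] at hnotriple hwit ⊢
  have h10 : (1 : Fin (n+3)) ≠ 0 := by
    simp [Fin.ext_iff]
  have h20 : (1 + 1 : Fin (n+3)) ≠ 0 := by
    simp [Fin.ext_iff, Fin.add_def, Nat.mod_eq_of_lt]
  have hne1 : ∀ i : Fin (n+3), i + 1 ≠ i := by
    intro i h
    apply h10
    have h' : i + 1 = i + 0 := by rwa [add_zero]
    exact add_left_cancel h'
  have hne2 : ∀ i : Fin (n+3), i + 1 + 1 ≠ i := by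
    intro i h
    apply h20
    have h' : i + (1 + 1) = i + 0 := by rw [← add_assoc]; rwa [add_zero]
    exact add_left_cancel h'
  have hcard3 : ∀ i : Fin (n+3), ({x i, x (i+1), y i} : Finset V).card = 3 :=
    fun i => hT _ (hwit i)
  have einj : Function.Injective (fun i : Fin (n+3) => ({x i, x (i+1), y i} : Finset V)) := by
    intro i j hij
    simp only at hij
    by_contra hne
    have key : ∀ a b : Fin (n+3), b = a + 1 →
        ({x a, x (a+1), y a} : Finset V) = {x b, x (b+1), y b} → False := by
      intro a b hb he
      subst hb
      have h1 : x a ≠ x (a+1) := fun h => hne1 a (hinj h).symm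
      have h2 : x a ≠ x (a+1+1) := fun h => hne2 a (hinj h).symm
      have h3' : x (a+1) ≠ x (a+1+1) := fun h => hne1 (a+1) (hinj h).symm
      have hsub : ({x a, x (a+1), x (a+1+1)} : Finset V) ⊆ {x a, x (a+1), y a} := by
        intro z hz
        simp only [Finset.mem_insert, Finset.mem_singleton] at hz
        rcases hz with rfl | rfl | rfl
        · simp
        · simp
        · rw [he]; simp
      have hcardS : ({x a, x (a+1), x (a+1+1)} : Finset V).card = 3 := by
        rw [Finset.card_insert_of_notMem (by simp [h1, h2]),
            Finset.card_insert_of_notMem (by simp [h3']), Finset.card_singleton]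
      have heq := Finset.eq_of_subset_of_card_le hsub (by rw [hcard3 a, hcardS])
      exact hnotriple a (by rw [heq]; exact hwit a)
    have hxj : x j ∈ ({x i, x (i+1), y i} : Finset V) := by rw [hij]; simp
    have hxj1 : x (j+1) ∈ ({x i, x (i+1), y i} : Finset V) := by rw [hij]; simp
    simp only [Finset.mem_insert, Finset.mem_singleton] at hxj hxj1
    rcases hxj with h | h | h
    · exact hne (hinj h).symm
    · exact key i j (hinj h) hij
    · rcases hxj1 with h' | h' | h'
      · exact key j i (hinj h').symm hij.symm
      · exact hne (add_right_cancel (hinj h')).symm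
      · exact hne1 j (hinj (h'.trans h.symm))
  set X := (Finset.univ.image x ∪ Finset.univ.image y) with hX
  have hsubX : ∀ i : Fin (n+3), ({x i, x (i+1), y i} : Finset V) ⊆ X := by
    intro i z hz
    simp only [Finset.mem_insert, Finset.mem_singleton] at hz
    simp only [hX, Finset.mem_union, Finset.mem_image, Finset.mem_univ, true_and]
    rcases hz with rfl | rfl | rfl
    · exact Or.inl ⟨i, rfl⟩
    · exact Or.inl ⟨i+1, rfl⟩
    · exact Or.inr ⟨i, rfl⟩
  have hW : n + 3 ≤ hWeight T X := by
    have hc : (Finset.univ : Finset (Fin (n+3))).card ≤ (T.filter (· ⊆ X)).card := by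
      apply Finset.card_le_card_of_injOn (fun i => ({x i, x (i+1), y i} : Finset V))
      · intro i _
        simp only [Finset.mem_filter]
        exact Finset.mem_filter.mpr ⟨hwit i, hsubX i⟩
      · exact einj.injOn
    simpa [hWeight] using hc
  have hXle : X.card ≤ 2 * (n+3) := by
    calc X.card ≤ (Finset.univ.image x).card + (Finset.univ.image y).card :=
          Finset.card_union_le _ _
    _ ≤ (n+3) + (n+3) := by
        gcongr <;> exact Finset.card_image_le.trans (by simp)
    _ = 2*(n+3) := by ring
  have hmod := hmodest X (by omega)
  simp only [HSuperDense, not_lt] at hmod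
  refine ⟨by omega, ?_, einj⟩
  unfold HDense
  omega
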